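/- Let w₀ be as defined (w₀(r) = η₀(r) + 2r²/(1+r²) - η₀²(r)/2 + ((1-r²)/(1+r²)) ∫₁^{1+r²} (ln t)/(1-t) dt, η₀(r) = -ln(1+r²)). Then sup_{r ∈ [0,∞)} |w₀(r) - η₀(r)| < ∞. -/

import Mathlib

open MeasureTheory Real

noncomputable section

/-- The radial profile `η₀(r) = -ln(1+r²)`. -/
def eta0r (r : ℝ) : ℝ := -Real.log (1 + r^2)

/-- The radial function `w₀`. -/
def W0 (r : ℝ) : ℝ :=
  eta0r r + 2*r^2/(1+r^2) - (eta0r r)^2/2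
    + ((1-r^2)/(1+r^2)) * ∫ t in (1:ℝ)..(1+r^2), Real.log t / (1-t)

lemma log_le_two_sqrt' {x : ℝ} (hx : 1 ≤ x) : Real.log x ≤ 2 * Real.sqrt x := by
  have h0 : (0:ℝ) < x := by linarith
  have h1 : Real.log (Real.sqrt x) ≤ Real.sqrt x - 1 :=
    Real.log_le_sub_one_of_pos (Real.sqrt_pos.mpr h0)
  rw [Real.log_sqrt h0.le] at h1
  linarith

lemma gb' {t : ℝ} (ht : 1 < t) :
    |Real.log t / (t * (1 - t))| ≤ 4 / (t * Real.sqrt t) := by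
  have h0 : (0:ℝ) < t := by linarith
  have hs0 : 0 < Real.sqrt t := Real.sqrt_pos.mpr h0
  have hs2 : Real.sqrt t ^ 2 = t := Real.sq_sqrt h0.le
  have hl : Real.log t ≤ t - 1 := by linarith [Real.log_le_sub_one_of_pos h0]
  have hl2 : Real.log t ≤ 2 * Real.sqrt t := log_le_two_sqrt' ht.le
  have hln : 0 ≤ Real.log t := Real.log_nonneg ht.le
  rw [abs_div, abs_of_nonneg hln, abs_of_neg (by nlinarith : t * (1 - t) < 0)]
  rw [div_le_div_iff₀ (by nlinarith) (by positivity)]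
  have e1 : Real.log t * (t * Real.sqrt t) ≤ (t - 1) * (t * Real.sqrt t) :=
    mul_le_mul_of_nonneg_right hl (by positivity)
  have e2 : Real.log t * (t * Real.sqrt t) ≤ 2 * Real.sqrt t * (t * Real.sqrt t) :=
    mul_le_mul_of_nonneg_right hl2 (by positivity)
  rcases le_total (Real.sqrt t) 4 with h | h
  · nlinarith [mul_nonneg (sub_nonneg.mpr h) (mul_nonneg (by linarith : (0:ℝ) ≤ t - 1) h0.le)]
  · have ht16 : (16:ℝ) ≤ t := by nlinarith
    nlinarith

lemma bound1' {t : ℝ} (ht : 1 < t) : |Real.log t / (1 - t)| ≤ 1 := by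
  have h0 : (0:ℝ) < t := by linarith
  have hl : Real.log t ≤ t - 1 := by linarith [Real.log_le_sub_one_of_pos h0]
  have hln : 0 ≤ Real.log t := Real.log_nonneg ht.le
  rw [abs_div, abs_of_nonneg hln, abs_of_neg (by linarith : 1 - t < 0)]
  rw [div_le_one (by linarith)]
  linarith

lemma bound2' {t : ℝ} (ht : 1 < t) : |Real.log t / (t * (1 - t))| ≤ 1 := by
  have h0 : (0:ℝ) < t := by linarith
  have hl : Real.log t ≤ t - 1 := by linarith [Real.log_le_sub_one_of_pos h0]
  have hln : 0 ≤ Real.log t := Real.log_nonneg ht.le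
  rw [abs_div, abs_of_nonneg hln, abs_of_neg (by nlinarith : t * (1 - t) < 0)]
  rw [div_le_one (by nlinarith)]
  nlinarith

lemma intble1' {x : ℝ} (hx : 1 ≤ x) :
    IntervalIntegrable (fun t => Real.log t / (1 - t)) volume 1 x := by
  rw [intervalIntegrable_iff_integrableOn_Ioc_of_le hx]
  apply MeasureTheory.Integrable.mono' (integrable_const (1:ℝ))
  · exact ((Real.measurable_log.div (measurable_const.sub measurable_id))).aestronglyMeasurable
  · filter_upwards [MeasureTheory.ae_restrict_mem measurableSet_Ioc] with t ht
    exact bound1' ht.1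

lemma intble2' {x : ℝ} (hx : 1 ≤ x) :
    IntervalIntegrable (fun t => Real.log t / (t * (1 - t))) volume 1 x := by
  rw [intervalIntegrable_iff_integrableOn_Ioc_of_le hx]
  apply MeasureTheory.Integrable.mono' (integrable_const (1:ℝ))
  · exact ((Real.measurable_log.div
      (measurable_id.mul (measurable_const.sub measurable_id)))).aestronglyMeasurable
  · filter_upwards [MeasureTheory.ae_restrict_mem measurableSet_Ioc] with t ht
    exact bound2' ht.1

lemma ftc_log' {x : ℝ} (hx : 1 ≤ x) :
    ∫ t in (1:ℝ)..x, -(Real.log t / t) = -(Real.log x)^2 / 2 := by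
  have h : ∀ t ∈ Set.uIcc (1:ℝ) x,
      HasDerivAt (fun s => -(Real.log s ^ 2) / 2) (-(Real.log t / t)) t := by
    intro t ht
    rw [Set.uIcc_of_le hx] at ht
    have ht0 : t ≠ 0 := by intro h; rw [h] at ht; linarith [ht.1]
    have := (((Real.hasDerivAt_log ht0).pow 2).neg).div_const 2
    refine this.congr_deriv ?_
    have : (0:ℝ) < t := by have := ht.1; linarith
    field_simp
    ring
  have hint : IntervalIntegrable (fun t => -(Real.log t / t)) volume 1 x := by
    apply ContinuousOn.intervalIntegrable
    apply ContinuousOn.neg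
    apply ContinuousOn.div
    · apply Real.continuousOn_log.mono
      intro t ht
      rw [Set.uIcc_of_le hx] at ht
      simp only [Set.mem_compl_iff, Set.mem_singleton_iff]
      intro h; rw [h] at ht; linarith [ht.1]
    · exact continuousOn_id
    · intro t ht
      rw [Set.uIcc_of_le hx] at ht
      intro h; rw [h] at ht; linarith [ht.1]
  have := intervalIntegral.integral_eq_sub_of_hasDerivAt h hint
  rw [this]
  simp [Real.log_one]

lemma ftc_sqrt' {x : ℝ} (hx : 1 ≤ x) :
    ∫ t in (1:ℝ)..x, 4 / (t * Real.sqrt t) = 8 - 8 / Real.sqrt x := by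
  have h : ∀ t ∈ Set.uIcc (1:ℝ) x,
      HasDerivAt (fun s => -8 / Real.sqrt s) (4 / (t * Real.sqrt t)) t := by
    intro t ht
    rw [Set.uIcc_of_le hx] at ht
    have ht0 : (0:ℝ) < t := by linarith [ht.1]
    have hs0 : Real.sqrt t ≠ 0 := ne_of_gt (Real.sqrt_pos.mpr ht0)
    have := (hasDerivAt_const t (-8:ℝ)).div (Real.hasDerivAt_sqrt (ne_of_gt ht0)) hs0
    refine this.congr_deriv ?_
    have hs2 : Real.sqrt t ^ 2 = t := Real.sq_sqrt ht0.le
    field_simp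
    nlinarith [Real.sqrt_pos.mpr ht0]
  have hint : IntervalIntegrable (fun t => 4 / (t * Real.sqrt t)) volume 1 x := by
    apply ContinuousOn.intervalIntegrable
    apply ContinuousOn.div continuousOn_const
    · exact continuousOn_id.mul Real.continuous_sqrt.continuousOn
    · intro t ht
      rw [Set.uIcc_of_le hx] at ht
      have ht0 : (0:ℝ) < t := by linarith [ht.1]
      positivity
  have := intervalIntegral.integral_eq_sub_of_hasDerivAt h hint
  rw [this]
  rw [Real.sqrt_one]
  ring

lemma Gbound' {x : ℝ} (hx : 1 ≤ x) :
    |∫ t in (1:ℝ)..x, Real.log t / (t * (1 - t))| ≤ 8 := by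
  have h1 : ‖∫ t in (1:ℝ)..x, Real.log t / (t * (1 - t))‖ ≤
      |∫ t in (1:ℝ)..x, 4 / (t * Real.sqrt t)| := by
    apply intervalIntegral.norm_integral_le_abs_of_norm_le
    · rw [Set.uIoc_of_le hx]
      filter_upwards [MeasureTheory.ae_restrict_mem measurableSet_Ioc] with t ht
      rw [Real.norm_eq_abs]
      exact gb' ht.1
    · apply ContinuousOn.intervalIntegrable
      apply ContinuousOn.div continuousOn_const
      · exact continuousOn_id.mul Real.continuous_sqrt.continuousOn
      · intro t ht
        rw [Set.uIcc_of_le hx] at ht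
        have ht0 : (0:ℝ) < t := by linarith [ht.1]
        positivity
  rw [ftc_sqrt' hx, Real.norm_eq_abs] at h1
  have hsx : 1 ≤ Real.sqrt x := by
    rw [show (1:ℝ) = Real.sqrt 1 by simp]
    exact Real.sqrt_le_sqrt hx
  have h2 : 0 < 8 / Real.sqrt x := by positivity
  have h3 : 8 / Real.sqrt x ≤ 8 := by
    rw [div_le_iff₀ (by linarith)]; nlinarith
  calc |∫ t in (1:ℝ)..x, Real.log t / (t * (1 - t))| ≤ |8 - 8 / Real.sqrt x| := h1
    _ ≤ 8 := by rw [abs_of_nonneg (by linarith)]; linarith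

lemma Fdecomp' {x : ℝ} (hx : 1 ≤ x) :
    ∫ t in (1:ℝ)..x, Real.log t / (1 - t)
      = -(Real.log x)^2 / 2 + ∫ t in (1:ℝ)..x, Real.log t / (t * (1 - t)) := by
  have key : ∫ t in (1:ℝ)..x,
      (Real.log t / (1 - t) - Real.log t / (t * (1 - t)))
      = ∫ t in (1:ℝ)..x, -(Real.log t / t) := by
    apply intervalIntegral.integral_congr
    intro t ht
    rw [Set.uIcc_of_le hx] at ht
    rcases eq_or_lt_of_le ht.1 with h | h
    · simp [← h]
    · have ht0 : t ≠ 0 := by intro hh; rw [hh] at h; linarith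
      have ht1 : (1:ℝ) - t ≠ 0 := by intro hh; nlinarith [h]
      field_simp
      ring
  rw [intervalIntegral.integral_sub (intble1' hx) (intble2' hx), ftc_log' hx] at key
  linarith

theorem stmt4 :
    ∃ C : ℝ, ∀ r : ℝ, 0 ≤ r → |W0 r - eta0r r| ≤ C := by
  use 14
  intro r _
  set x : ℝ := 1 + r^2 with hxdef
  have hx1 : (1:ℝ) ≤ x := by nlinarith [sq_nonneg r]
  have hx0 : (0:ℝ) < x := by linarith
  set G : ℝ := ∫ t in (1:ℝ)..x, Real.log t / (t * (1 - t)) with hGdef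
  have hG : |G| ≤ 8 := Gbound' hx1
  have hF : ∫ t in (1:ℝ)..x, Real.log t / (1 - t) = -(Real.log x)^2 / 2 + G :=
    Fdecomp' hx1
  have hE : W0 r - eta0r r
      = 2*r^2/x - (Real.log x)^2/x + ((1 - r^2)/x) * G := by
    rw [W0, hF]
    have hne : x ≠ 0 := ne_of_gt hx0
    rw [eta0r]
    field_simp
    ring
  rw [hE]
  have hsq : (Real.log x)^2 ≤ 4 * x := by
    have h1 : Real.log x ≤ 2 * Real.sqrt x := log_le_two_sqrt' hx1
    have h2 : 0 ≤ Real.log x := Real.log_nonneg hx1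
    have h3 : Real.sqrt x ^ 2 = x := Real.sq_sqrt (by linarith)
    nlinarith [Real.sqrt_nonneg x]
  have b1 : |2*r^2/x| ≤ 2 := by
    rw [abs_of_nonneg (by positivity)]
    rw [div_le_iff₀ hx0]; nlinarith [sq_nonneg r]
  have b2 : |(Real.log x)^2/x| ≤ 4 := by
    rw [abs_of_nonneg (by positivity)]
    rw [div_le_iff₀ hx0]; nlinarith
  have b3 : |((1 - r^2)/x) * G| ≤ 8 := by
    rw [abs_mul]
    have hc : |(1 - r^2)/x| ≤ 1 := by
      rw [abs_div, abs_of_pos hx0, div_le_one hx0]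
      rw [abs_le]; constructor <;> nlinarith [sq_nonneg r]
    calc |(1 - r^2)/x| * |G| ≤ 1 * 8 :=
          mul_le_mul hc hG (abs_nonneg _) (by norm_num)
      _ = 8 := by norm_num
  calc |2*r^2/x - (Real.log x)^2/x + ((1 - r^2)/x) * G|
      ≤ |2*r^2/x - (Real.log x)^2/x| + |((1 - r^2)/x) * G| := abs_add_le _ _
    _ ≤ |2*r^2/x| + |(Real.log x)^2/x| + |((1 - r^2)/x) * G| := by
        linarith [abs_sub (2*r^2/x) ((Real.log x)^2/x)]
    _ ≤ 14 := by linarith
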